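/- arXiv:1508.06395 — 4 statements merged into one kernel-verified Lean document; each statement's English description precedes it below -/
import Mathlib

section
/- Let m ≥ 2 and b ∈ {0,1}, and let σ_{m,b} be the uniform distribution over {(u,v) ∈ 𝔽₂^m × 𝔽₂^m : u·v = b}. Then Cor(σ_{m,b}) ≤ 1/2^{m/2−1}. -/
open scoped BigOperators ENNReal

namespace SR

variable {U V X Y : Type*}

/-- `μ` is a probability distribution on a finite type. -/
def IsDist {α : Type*} [Fintype α] (μ : α → ℝ) : Prop :=
  (∀ a, 0 ≤ μ a) ∧ ∑ a, μ a = 1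

/-- Expectation of `f` under `μ`. -/
def expect {α : Type*} [Fintype α] (μ : α → ℝ) (f : α → ℝ) : ℝ :=
  ∑ a, μ a * f a

/-- First (`U`-)marginal of a bipartite distribution. -/
def margFst [Fintype V] (ρ : U × V → ℝ) : U → ℝ :=
  fun u => ∑ v, ρ (u, v)

/-- Second (`V`-)marginal of a bipartite distribution. -/
def margSnd [Fintype U] (ρ : U × V → ℝ) : V → ℝ :=
  fun v => ∑ u, ρ (u, v)

/-- Maximum correlation of a bipartite distribution (sSup of the empty set is 0). -/
noncomputable def cor [Fintype U] [Fintype V] (ρ : U × V → ℝ) : ℝ :=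
  sSup { t : ℝ | ∃ (f : U → ℝ) (g : V → ℝ),
      expect (margFst ρ) f = 0 ∧ expect (margSnd ρ) g = 0 ∧
      expect (margFst ρ) (fun u => f u ^ 2) = 1 ∧
      expect (margSnd ρ) (fun v => g v ^ 2) = 1 ∧
      t = ∑ x : U × V, ρ x * (f x.1 * g x.2) }

/-- Tensor product of two bipartite distributions. -/
def tensor (ρ : U × V → ℝ) (σ : X × Y → ℝ) : (U × X) × (V × Y) → ℝ :=
  fun p => ρ (p.1.1, p.2.1) * σ (p.1.2, p.2.2)

/-- Tensor product of a family of bipartite distributions. -/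
def tensorPi {n : ℕ} {U V : Fin n → Type*} (ρ : ∀ i, U i × V i → ℝ) :
    (∀ i, U i) × (∀ i, V i) → ℝ :=
  fun p => ∏ i, ρ i (p.1 i, p.2 i)

/-- The distribution of `ℓ` i.i.d. samples from a bipartite distribution `ρ`. -/
def iid (ρ : U × V → ℝ) (ℓ : ℕ) : (Fin ℓ → U) × (Fin ℓ → V) → ℝ :=
  fun p => ∏ i, ρ (p.1 i, p.2 i)

/-- Agreement complexity of `ρ` at success probability `p`. -/
noncomputable def agr [Fintype U] [Fintype V] (ρ : U × V → ℝ) (p : ℝ) : ℝ :=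
  sInf { c : ℝ | ∃ (ℓ : ℕ) (f : (Fin ℓ → U) → ℝ) (g : (Fin ℓ → V) → ℝ),
      (∀ x, f x ∈ Set.Icc (0:ℝ) 1) ∧ (∀ y, g y ∈ Set.Icc (0:ℝ) 1) ∧
      p ≤ (∑ x : (Fin ℓ → U) × (Fin ℓ → V), iid ρ ℓ x * (f x.1 * g x.2)) ∧
      c = (∑ x : (Fin ℓ → U) × (Fin ℓ → V), iid ρ ℓ x * f x.1)
        + (∑ x : (Fin ℓ → U) × (Fin ℓ → V), iid ρ ℓ x * g x.2) }

/-- There is a `p`-collision protocol for `ρ` with domain size `n` and output size at most `k`.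
    The players may use private randomness (uniform over `Fin sA`, `Fin sB` weighted by
    distributions `μA`, `μB`, independent of everything else). -/
def ColLE [Fintype U] [Fintype V] (ρ : U × V → ℝ) (n : ℕ) (p : ℝ) (k : ℕ) : Prop :=
  ∃ (ℓ sA sB : ℕ) (μA : Fin sA → ℝ) (μB : Fin sB → ℝ)
    (A : (Fin ℓ → U) → Fin sA → Finset (Fin n))
    (B : (Fin ℓ → V) → Fin sB → Finset (Fin n)),
    IsDist μA ∧ IsDist μB ∧
    (∀ i : Fin n, p ≤ ∑ x : (Fin ℓ → U) × (Fin ℓ → V), ∑ rA, ∑ rB,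
        iid ρ ℓ x * (μA rA * μB rB) *
          (if i ∈ A x.1 rA ∧ i ∈ B x.2 rB then (1:ℝ) else 0)) ∧
    (∀ (x : (Fin ℓ → U) × (Fin ℓ → V)) (rA : Fin sA),
        0 < iid ρ ℓ x → 0 < μA rA → (A x.1 rA).card ≤ k) ∧
    (∀ (x : (Fin ℓ → U) × (Fin ℓ → V)) (rB : Fin sB),
        0 < iid ρ ℓ x → 0 < μB rB → (B x.2 rB).card ≤ k)

/-- Collision complexity `col_ρ(n, p)`, valued in `ℕ∞` (`sInf ∅ = ⊤`). -/
noncomputable def col [Fintype U] [Fintype V] (ρ : U × V → ℝ) (n : ℕ) (p : ℝ) : ℕ∞ :=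
  sInf { k : ℕ∞ | ∃ m : ℕ, k = (m : ℕ∞) ∧ ColLE ρ n p m }

/-- Base-2 Shannon entropy of a finitely supported distribution. -/
noncomputable def ent2 {α : Type*} [Fintype α] (μ : α → ℝ) : ℝ :=
  ∑ a, -(μ a * Real.logb 2 (μ a))

open Classical in
/-- Probability of an event under `μ`. -/
noncomputable def prEvent {Ω : Type*} [Fintype Ω] (μ : Ω → ℝ) (P : Ω → Prop) : ℝ :=
  ∑ ω, if P ω then μ ω else 0

/-- The distribution of a random variable `Z` conditioned on an event `P`. -/
noncomputable def condDist {Ω α : Type*} [Fintype Ω] (μ : Ω → ℝ) (Z : Ω → α)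
    (P : Ω → Prop) : α → ℝ :=
  fun a => prEvent μ (fun ω => Z ω = a ∧ P ω) / prEvent μ P

/-- The `L^r(μ)`-norm of a complex-valued function on a finite probability space. -/
noncomputable def lnorm {α : Type*} [Fintype α] (μ : α → ℝ) (r : ℝ) (h : α → ℂ) : ℝ :=
  (∑ a, μ a * ‖h a‖ ^ r) ^ (1 / r)

/-- The conditional-expectation operator `T_ρ` of a bipartite distribution. -/
noncomputable def condOp [Fintype U] [Fintype V] (ρ : U × V → ℝ) (f : U → ℂ) : V → ℂ :=
  fun v => ∑ u, ((ρ (u, v) / margSnd ρ v : ℝ) : ℂ) * f u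

/-- `ρ` is `q`-to-`p` hypercontractive. -/
def Hyper [Fintype U] [Fintype V] (ρ : U × V → ℝ) (q p : ℝ) : Prop :=
  ∀ f : U → ℂ, lnorm (margSnd ρ) q (condOp ρ f) ≤ lnorm (margFst ρ) p f

/-- Inner product over 𝔽₂. -/
def ipF2 {m : ℕ} (u v : Fin m → ZMod 2) : ZMod 2 := ∑ i, u i * v i

/-- `σ_{m,b}`: uniform distribution on pairs `(u,v) ∈ 𝔽₂^m × 𝔽₂^m` with `u·v = b`. -/
noncomputable def sigmaIP (m : ℕ) (b : ZMod 2) :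
    ((Fin m → ZMod 2) × (Fin m → ZMod 2)) → ℝ :=
  fun p => if ipF2 p.1 p.2 = b then
      (((Finset.univ.filter
        (fun q : (Fin m → ZMod 2) × (Fin m → ZMod 2) => ipF2 q.1 q.2 = b)).card : ℝ))⁻¹
    else 0

/-- `ρ_disj`: uniform distribution on `{(0,0),(0,1),(1,0)} ⊆ {0,1} × {0,1}`
    (with `false = 0`, `true = 1`). -/
noncomputable def rhoDisj : Bool × Bool → ℝ :=
  fun x => if x = (true, true) then 0 else 1/3




noncomputable def chi (x : ZMod 2) : ℝ := if x = 0 then 1 else -1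

lemma zmod2_cases : ∀ x : ZMod 2, x = 0 ∨ x = 1 := by decide

@[simp] lemma chi_zero : chi 0 = 1 := by simp [chi]
@[simp] lemma chi_one : chi 1 = -1 := by simp [chi, show (1:ZMod 2) ≠ 0 by decide]

lemma chi_add (x y : ZMod 2) : chi (x + y) = chi x * chi y := by
  have h11 : (1 + 1 : ZMod 2) = 0 := by decide
  rcases zmod2_cases x with hx | hx <;> rcases zmod2_cases y with hy | hy <;>
    subst hx <;> subst hy <;> simp [h11]

lemma ite_eq_chi (c x : ZMod 2) : (if x = c then (1:ℝ) else 0) = (1 + chi c * chi x) / 2 := by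
  have h01 : (0:ZMod 2) ≠ 1 := by decide
  have h10 : (1:ZMod 2) ≠ 0 := by decide
  rcases zmod2_cases x with hx | hx <;> rcases zmod2_cases c with hc | hc <;>
    subst hx <;> subst hc <;> norm_num [h01, h10]

lemma chi_sum {ι : Type*} (s : Finset ι) (h : ι → ZMod 2) :
    chi (∑ i ∈ s, h i) = ∏ i ∈ s, chi (h i) := by
  induction s using Finset.cons_induction with
  | empty => simp
  | cons a s ha ih => rw [Finset.sum_cons, Finset.prod_cons, chi_add, ih]

lemma ipF2_comm {m : ℕ} (u v : Fin m → ZMod 2) : ipF2 u v = ipF2 v u := by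
  simp [ipF2, mul_comm]

@[simp] lemma ipF2_zero_left {m : ℕ} (v : Fin m → ZMod 2) : ipF2 0 v = 0 := by
  simp [ipF2]

@[simp] lemma ipF2_zero_right {m : ℕ} (u : Fin m → ZMod 2) : ipF2 u 0 = 0 := by
  simp [ipF2]

lemma ipF2_add_left {m : ℕ} (u u' v : Fin m → ZMod 2) :
    ipF2 (u + u') v = ipF2 u v + ipF2 u' v := by
  simp [ipF2, add_mul, Finset.sum_add_distrib]

lemma zmod2_sum (F : ZMod 2 → ℝ) : ∑ t : ZMod 2, F t = F 0 + F 1 := by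
  have h : (Finset.univ : Finset (ZMod 2)) = {0, 1} := by decide
  rw [h, Finset.sum_insert (by decide), Finset.sum_singleton]

lemma sum_chi_ipF2 {m : ℕ} (u : Fin m → ZMod 2) :
    ∑ v : Fin m → ZMod 2, chi (ipF2 u v) = if u = 0 then (2:ℝ)^m else 0 := by
  calc ∑ v : Fin m → ZMod 2, chi (ipF2 u v)
      = ∑ v : Fin m → ZMod 2, ∏ i, chi (u i * v i) :=
        Finset.sum_congr rfl fun v _ => chi_sum _ _
    _ = ∏ i, ∑ t : ZMod 2, chi (u i * t) :=
        (Fintype.prod_sum (κ := fun _ : Fin m => ZMod 2) (fun i t => chi (u i * t))).symm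
    _ = ∏ i, (if u i = 0 then (2:ℝ) else 0) := by
        refine Finset.prod_congr rfl fun i _ => ?_
        rcases zmod2_cases (u i) with h | h <;> rw [h] <;> rw [zmod2_sum] <;>
          norm_num [show (1*0 : ZMod 2) = 0 by decide, show (1*1 : ZMod 2) = 1 by decide,
            show (1:ZMod 2) ≠ 0 by decide]
    _ = if u = 0 then (2:ℝ)^m else 0 := by
        by_cases h : u = 0
        · subst h; simp
        · rw [if_neg h]
          obtain ⟨i, hi⟩ : ∃ i, u i ≠ 0 := by
            by_contra hc; push_neg at hc; exact h (funext hc)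
          exact Finset.prod_eq_zero (Finset.mem_univ i) (if_neg hi)

lemma add_eq_zero_iff' {m : ℕ} (u u' : Fin m → ZMod 2) : u + u' = 0 ↔ u' = u := by
  constructor
  · intro h; funext i
    have h2 : ∀ a b : ZMod 2, a + b = 0 → b = a := by decide
    exact h2 _ _ (congrFun h i)
  · rintro rfl; funext i
    have h2 : ∀ a : ZMod 2, a + a = 0 := by decide
    exact h2 _

lemma spectral {m : ℕ} (f g : (Fin m → ZMod 2) → ℝ) :
    (∑ u, ∑ v, chi (ipF2 u v) * f u * g v) ^ 2
      ≤ (2:ℝ)^m * (∑ u, f u ^ 2) * (∑ v, g v ^ 2) := by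
  set F : (Fin m → ZMod 2) → ℝ := fun v => ∑ u, chi (ipF2 u v) * f u with hF
  have h1 : (∑ u, ∑ v, chi (ipF2 u v) * f u * g v) = ∑ v, F v * g v := by
    rw [Finset.sum_comm]
    refine Finset.sum_congr rfl fun v _ => ?_
    rw [hF, Finset.sum_mul]
  have hFsq : ∑ v, F v ^ 2 = (2:ℝ)^m * ∑ u, f u ^ 2 := by
    calc ∑ v, F v ^ 2
        = ∑ v, ∑ u, ∑ u', (chi (ipF2 u v) * f u) * (chi (ipF2 u' v) * f u') := by
          refine Finset.sum_congr rfl fun v _ => ?_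
          rw [sq, hF, Finset.sum_mul_sum]
      _ = ∑ u, ∑ u', (f u * f u') * ∑ v, chi (ipF2 (u + u') v) := by
          rw [Finset.sum_comm]
          refine Finset.sum_congr rfl fun u _ => ?_
          rw [Finset.sum_comm]
          refine Finset.sum_congr rfl fun u' _ => ?_
          rw [Finset.mul_sum]
          refine Finset.sum_congr rfl fun v _ => ?_
          rw [ipF2_add_left, chi_add]; ring
      _ = ∑ u, ∑ u', (f u * f u') * (if u' = u then (2:ℝ)^m else 0) := by
          refine Finset.sum_congr rfl fun u _ => Finset.sum_congr rfl fun u' _ => ?_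
          rw [sum_chi_ipF2]
          congr 1
          simp [add_eq_zero_iff' u u']
      _ = (2:ℝ)^m * ∑ u, f u ^ 2 := by
          rw [Finset.mul_sum]
          refine Finset.sum_congr rfl fun u _ => ?_
          simp only [mul_ite, mul_zero]
          rw [Fintype.sum_ite_eq']
          ring
  rw [h1]
  calc (∑ v, F v * g v) ^ 2 ≤ (∑ v, F v ^ 2) * (∑ v, g v ^ 2) :=
        Finset.sum_mul_sq_le_sq_mul_sq _ _ _
    _ = (2:ℝ)^m * (∑ u, f u ^ 2) * (∑ v, g v ^ 2) := by rw [hFsq]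


noncomputable def Nc (m : ℕ) (b : ZMod 2) : ℕ :=
  (Finset.univ.filter
    (fun q : (Fin m → ZMod 2) × (Fin m → ZMod 2) => ipF2 q.1 q.2 = b)).card

lemma sigma_apply {m : ℕ} (b : ZMod 2) (x : (Fin m → ZMod 2) × (Fin m → ZMod 2)) :
    sigmaIP m b x = (if ipF2 x.1 x.2 = b then (1:ℝ) else 0) / (Nc m b : ℝ) := by
  unfold sigmaIP Nc
  by_cases h : ipF2 x.1 x.2 = b <;> simp [h, one_div]

lemma card_pi2 (m : ℕ) : (Fintype.card (Fin m → ZMod 2) : ℝ) = (2:ℝ)^m := by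
  simp

lemma Nc_eq (m : ℕ) (b : ZMod 2) :
    (Nc m b : ℝ) = (2:ℝ)^m * ((2:ℝ)^m + chi b) / 2 := by
  have h0 : ((Nc m b : ℕ) : ℝ)
      = ∑ x : (Fin m → ZMod 2) × (Fin m → ZMod 2),
          (if ipF2 x.1 x.2 = b then (1:ℝ) else 0) := by
    rw [Finset.sum_boole]
    rfl
  rw [h0]
  simp_rw [ite_eq_chi]
  rw [← Finset.sum_div]
  rw [Finset.sum_add_distrib, Finset.sum_const, ← Finset.mul_sum]
  rw [Fintype.sum_prod_type]
  simp_rw [sum_chi_ipF2]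
  rw [Fintype.sum_ite_eq']
  simp only [Finset.card_univ, nsmul_eq_mul, mul_one]
  rw [Fintype.card_prod]
  push_cast
  rw [card_pi2]
  ring

lemma fiber_fst {m : ℕ} (b : ZMod 2) (u : Fin m → ZMod 2) :
    ∑ v : Fin m → ZMod 2, (if ipF2 u v = b then (1:ℝ) else 0)
      = ((2:ℝ)^m + chi b * (if u = 0 then (2:ℝ)^m else 0)) / 2 := by
  simp_rw [ite_eq_chi]
  rw [← Finset.sum_div]
  congr 1
  rw [Finset.sum_add_distrib, Finset.sum_const, ← Finset.mul_sum, sum_chi_ipF2]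
  simp [Finset.card_univ]

lemma fiber_snd {m : ℕ} (b : ZMod 2) (v : Fin m → ZMod 2) :
    ∑ u : Fin m → ZMod 2, (if ipF2 u v = b then (1:ℝ) else 0)
      = ((2:ℝ)^m + chi b * (if v = 0 then (2:ℝ)^m else 0)) / 2 := by
  simp_rw [fun u => ipF2_comm u v]
  exact fiber_fst b v

private lemma le_of_sq_le_sq' {a k : ℝ} (h : a ^ 2 ≤ k ^ 2) (hk : 0 ≤ k) : a ≤ k := by
  nlinarith

private lemma final0 {s P : ℝ} (hs : 2 ≤ s) (hP : 1 ≤ P) :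
    (P / 2 + s * P) * s ≤ 2 * (s ^ 2 * P) := by
  have h0 : (0:ℝ) ≤ s := by linarith
  have h1 : (0:ℝ) ≤ s * P := mul_nonneg h0 (by linarith)
  have h2 : s * P * 2 ≤ s * P * s := mul_le_mul_of_nonneg_left hs h1
  nlinarith [h1, h2]

private lemma final1 {s P : ℝ} (hP : 0 ≤ P) : s * P * s ≤ 2 * (s ^ 2 * P) := by
  nlinarith [mul_nonneg (sq_nonneg s) hP]

private lemma prod_le_half {x y P : ℝ} (hx : x ^ 2 ≤ P / 2) (hy : y ^ 2 ≤ P / 2) :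
    x * y ≤ P / 2 := by nlinarith [sq_nonneg (x - y)]

set_option maxHeartbeats 1600000

theorem stmt11 (m : ℕ) (hm : 2 ≤ m) (b : ZMod 2) :
    cor (sigmaIP m b) ≤ 1 / (2:ℝ) ^ ((m:ℝ)/2 - 1) := by
  classical
  have h2m : (4:ℝ) ≤ (2:ℝ)^m := by
    calc (4:ℝ) = 2^2 := by norm_num
      _ ≤ 2^m := pow_le_pow_right₀ (by norm_num) hm
  set s : ℝ := Real.sqrt ((2:ℝ)^m) with hs
  have hs2 : s^2 = (2:ℝ)^m := Real.sq_sqrt (by positivity)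
  have hs_pos : 0 < s := Real.sqrt_pos.2 (by positivity)
  have hs_ge : 2 ≤ s := by nlinarith
  have hbound : 1 / (2:ℝ) ^ ((m:ℝ)/2 - 1) = 2 / s := by
    have hhalf : (2:ℝ) ^ ((m:ℝ)/2) = s := by
      rw [hs, show ((m:ℝ)/2) = (m:ℝ) * (1/2) by ring, Real.rpow_mul (by norm_num),
        Real.rpow_natCast, Real.sqrt_eq_rpow]
    rw [Real.rpow_sub (by norm_num), Real.rpow_one, hhalf, one_div_div]
  rw [hbound]
  clear_value s
  apply Real.sSup_le _ (by positivity)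
  rintro t ⟨f, g, hf0, hg0, hf2, hg2, rfl⟩
  -- basic facts about chi b and the normalization constant
  have hchi : chi b = 1 ∨ chi b = -1 := by
    rcases zmod2_cases b with h | h <;> subst h <;> simp
  set Nr : ℝ := (Nc m b : ℝ) with hNrdef
  have hNr : Nr = (2:ℝ)^m * ((2:ℝ)^m + chi b) / 2 := Nc_eq m b
  clear_value Nr
  have hNpos : 0 < Nr := by
    rw [hNr]; rcases hchi with h | h <;> rw [h] <;> nlinarith
  have hN0 : Nr ≠ 0 := ne_of_gt hNpos
  -- marginals
  have hmF : ∀ u, margFst (sigmaIP m b) u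
      = ((2:ℝ)^m + chi b * (if u = 0 then (2:ℝ)^m else 0)) / 2 / Nr := by
    intro u
    unfold margFst
    simp_rw [sigma_apply]
    rw [← Finset.sum_div, fiber_fst, hNrdef]
  have hmS : ∀ v, margSnd (sigmaIP m b) v
      = ((2:ℝ)^m + chi b * (if v = 0 then (2:ℝ)^m else 0)) / 2 / Nr := by
    intro v
    unfold margSnd
    simp_rw [sigma_apply]
    rw [← Finset.sum_div, fiber_snd, hNrdef]
  -- expectation constraints in explicit form
  have hexpF : ∀ h : (Fin m → ZMod 2) → ℝ,
      expect (margFst (sigmaIP m b)) h * (2 * Nr)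
        = (2:ℝ)^m * ((∑ u, h u) + chi b * h 0) := by
    intro h
    have hterm : ∀ u, margFst (sigmaIP m b) u * h u * (2 * Nr)
        = (2:ℝ)^m * h u + chi b * (if u = 0 then (2:ℝ)^m * h u else 0) := by
      intro u
      rw [hmF u]
      split_ifs with hu
      all_goals field_simp
      all_goals try ring
    unfold expect
    calc (∑ u, margFst (sigmaIP m b) u * h u) * (2 * Nr)
        = ∑ u, ((2:ℝ)^m * h u + chi b * (if u = 0 then (2:ℝ)^m * h u else 0)) := by
          rw [Finset.sum_mul]; exact Finset.sum_congr rfl fun u _ => hterm u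
      _ = (2:ℝ)^m * ((∑ u, h u) + chi b * h 0) := by
          rw [Finset.sum_add_distrib, ← Finset.mul_sum, ← Finset.mul_sum,
            Fintype.sum_ite_eq']
          ring
  have hexpS : ∀ h : (Fin m → ZMod 2) → ℝ,
      expect (margSnd (sigmaIP m b)) h * (2 * Nr)
        = (2:ℝ)^m * ((∑ v, h v) + chi b * h 0) := by
    intro h
    have hterm : ∀ v, margSnd (sigmaIP m b) v * h v * (2 * Nr)
        = (2:ℝ)^m * h v + chi b * (if v = 0 then (2:ℝ)^m * h v else 0) := by
      intro v
      rw [hmS v]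
      split_ifs with hu
      all_goals field_simp
      all_goals try ring
    unfold expect
    calc (∑ v, margSnd (sigmaIP m b) v * h v) * (2 * Nr)
        = ∑ v, ((2:ℝ)^m * h v + chi b * (if v = 0 then (2:ℝ)^m * h v else 0)) := by
          rw [Finset.sum_mul]; exact Finset.sum_congr rfl fun v _ => hterm v
      _ = (2:ℝ)^m * ((∑ v, h v) + chi b * h 0) := by
          rw [Finset.sum_add_distrib, ← Finset.mul_sum, ← Finset.mul_sum,
            Fintype.sum_ite_eq']
          ring
  have h2mpos : (0:ℝ) < (2:ℝ)^m := by positivity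
  -- constraints
  have hfA : (∑ u, f u) + chi b * f 0 = 0 := by
    have h := hexpF f
    rw [hf0, zero_mul] at h
    exact (mul_eq_zero.1 h.symm).resolve_left (ne_of_gt h2mpos)
  have hgA : (∑ v, g v) + chi b * g 0 = 0 := by
    have h := hexpS g
    rw [hg0, zero_mul] at h
    exact (mul_eq_zero.1 h.symm).resolve_left (ne_of_gt h2mpos)
  have hfB : (∑ u, f u ^ 2) + chi b * f 0 ^ 2 = (2:ℝ)^m + chi b := by
    have h := hexpF (fun u => f u ^ 2)
    rw [hf2, one_mul] at h
    have key : (2:ℝ)^m * ((2:ℝ)^m + chi b)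
        = (2:ℝ)^m * ((∑ u, f u ^ 2) + chi b * f 0 ^ 2) := by
      rw [← h, hNr]; ring
    exact (mul_left_cancel₀ (ne_of_gt h2mpos) key).symm
  have hgB : (∑ v, g v ^ 2) + chi b * g 0 ^ 2 = (2:ℝ)^m + chi b := by
    have h := hexpS (fun v => g v ^ 2)
    rw [hg2, one_mul] at h
    have key : (2:ℝ)^m * ((2:ℝ)^m + chi b)
        = (2:ℝ)^m * ((∑ v, g v ^ 2) + chi b * g 0 ^ 2) := by
      rw [← h, hNr]; ring
    exact (mul_left_cancel₀ (ne_of_gt h2mpos) key).symm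
  -- main identity
  have hT : ∀ f g : (Fin m → ZMod 2) → ℝ,
      (∑ x : (Fin m → ZMod 2) × (Fin m → ZMod 2), sigmaIP m b x * (f x.1 * g x.2)) * (2 * Nr)
        = (∑ u, f u) * (∑ v, g v)
          + chi b * (∑ u, ∑ v, chi (ipF2 u v) * f u * g v) := by
    intro f g
    have hterm : ∀ x : (Fin m → ZMod 2) × (Fin m → ZMod 2),
        sigmaIP m b x * (f x.1 * g x.2) * (2 * Nr)
          = f x.1 * g x.2 + chi b * (chi (ipF2 x.1 x.2) * f x.1 * g x.2) := by
      intro x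
      rw [sigma_apply, ite_eq_chi, ← hNrdef]
      field_simp
    calc (∑ x : (Fin m → ZMod 2) × (Fin m → ZMod 2),
            sigmaIP m b x * (f x.1 * g x.2)) * (2 * Nr)
        = ∑ x : (Fin m → ZMod 2) × (Fin m → ZMod 2),
            (f x.1 * g x.2 + chi b * (chi (ipF2 x.1 x.2) * f x.1 * g x.2)) := by
          rw [Finset.sum_mul]; exact Finset.sum_congr rfl fun x _ => hterm x
      _ = (∑ u, f u) * (∑ v, g v)
          + chi b * (∑ u, ∑ v, chi (ipF2 u v) * f u * g v) := by
          rw [Finset.sum_add_distrib, ← Finset.mul_sum]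
          congr 1
          · rw [Fintype.sum_prod_type, Finset.sum_mul_sum]
          · rw [Fintype.sum_prod_type]
  -- helper for sums of updated functions
  have hupdate_sum : ∀ h : (Fin m → ZMod 2) → ℝ,
      ∑ u, Function.update h 0 (0:ℝ) u = (∑ u, h u) - h 0 := by
    intro h
    have hpt : ∀ u, Function.update h 0 (0:ℝ) u = h u - (if u = 0 then h 0 else 0) := by
      intro u
      by_cases hu : u = 0
      · subst hu; simp
      · rw [Function.update_of_ne hu]; simp [hu]
    simp_rw [hpt]
    rw [Finset.sum_sub_distrib, Fintype.sum_ite_eq']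
  rcases zmod2_cases b with hb | hb
  · -- case b = 0
    have hchi0 : chi b = 1 := by rw [hb]; simp
    rw [hchi0] at hfA hgA hfB hgB
    rw [one_mul] at hfA hgA hfB hgB
    have hQf_ge : f 0 ^ 2 ≤ ∑ u, f u ^ 2 :=
      Finset.single_le_sum (fun i _ => sq_nonneg (f i)) (Finset.mem_univ 0)
    have hQg_ge : g 0 ^ 2 ≤ ∑ v, g v ^ 2 :=
      Finset.single_le_sum (fun i _ => sq_nonneg (g i)) (Finset.mem_univ 0)
    have hQf_nonneg : (0:ℝ) ≤ ∑ u, f u ^ 2 :=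
      Finset.sum_nonneg fun i _ => sq_nonneg (f i)
    have hQg_nonneg : (0:ℝ) ≤ ∑ v, g v ^ 2 :=
      Finset.sum_nonneg fun i _ => sq_nonneg (g i)
    have hf0sq : f 0 ^ 2 ≤ ((2:ℝ)^m + 1) / 2 := by linarith
    have hg0sq : g 0 ^ 2 ≤ ((2:ℝ)^m + 1) / 2 := by linarith
    have hQf_le : (∑ u, f u ^ 2) ≤ (2:ℝ)^m + 1 := by nlinarith [sq_nonneg (f 0)]
    have hQg_le : (∑ v, g v ^ 2) ≤ (2:ℝ)^m + 1 := by nlinarith [sq_nonneg (g 0)]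
    set Sf := ∑ u, f u with hSfdef
    set Sg := ∑ v, g v with hSgdef
    set Qf := ∑ u, f u ^ 2 with hQfdef
    set Qg := ∑ v, g v ^ 2 with hQgdef
    set B := ∑ u, ∑ v, chi (ipF2 u v) * f u * g v with hBdef
    clear_value Sf Sg Qf Qg B
    have hB2 : B ^ 2 ≤ (2:ℝ)^m * Qf * Qg := by
      rw [hBdef, hQfdef, hQgdef]; exact spectral f g
    have hK : (0:ℝ) < s * ((2:ℝ)^m + 1) := by positivity
    have hprod : Qf * Qg ≤ ((2:ℝ)^m + 1) * ((2:ℝ)^m + 1) :=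
      mul_le_mul hQf_le hQg_le hQg_nonneg (by positivity)
    have hBQ : B ^ 2 ≤ (s * ((2:ℝ)^m + 1)) ^ 2 := by
      calc B ^ 2 ≤ (2:ℝ)^m * Qf * Qg := hB2
        _ = (2:ℝ)^m * (Qf * Qg) := by ring
        _ ≤ (2:ℝ)^m * (((2:ℝ)^m + 1) * ((2:ℝ)^m + 1)) :=
            mul_le_mul_of_nonneg_left hprod h2mpos.le
        _ = (s * ((2:ℝ)^m + 1)) ^ 2 := by rw [mul_pow, hs2]; ring
    have hB : B ≤ s * ((2:ℝ)^m + 1) := le_of_sq_le_sq' hBQ hK.le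
    have hf0g0 : f 0 * g 0 ≤ ((2:ℝ)^m + 1) / 2 := prod_le_half hf0sq hg0sq
    have h2Nr : 2 * Nr = s ^ 2 * ((2:ℝ)^m + 1) := by rw [hNr, hchi0, hs2]; ring
    have hTv := hT f g
    rw [← hSfdef, ← hSgdef, ← hBdef] at hTv
    have hTeq : (∑ x : (Fin m → ZMod 2) × (Fin m → ZMod 2),
        sigmaIP m b x * (f x.1 * g x.2))
        = (Sf * Sg + chi b * B) / (2 * Nr) := by
      rw [eq_div_iff (by positivity)]
      exact hTv
    rw [hTeq, div_le_div_iff₀ (by positivity) hs_pos, hchi0, one_mul, h2Nr]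
    have hsum : Sf * Sg + B ≤ ((2:ℝ)^m + 1) / 2 + s * ((2:ℝ)^m + 1) := by
      have hSf : Sf = -(f 0) := by linarith
      have hSg : Sg = -(g 0) := by linarith
      rw [hSf, hSg]
      have hmm : -(f 0) * -(g 0) = f 0 * g 0 := by ring
      rw [hmm]
      linarith [hf0g0, hB]
    calc (Sf * Sg + B) * s
        ≤ (((2:ℝ)^m + 1) / 2 + s * ((2:ℝ)^m + 1)) * s :=
          mul_le_mul_of_nonneg_right hsum hs_pos.le
      _ ≤ 2 * (s ^ 2 * ((2:ℝ)^m + 1)) := final0 hs_ge (by linarith)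
  · -- case b = 1
    have hchi1 : chi b = -1 := by rw [hb]; simp
    set f' : (Fin m → ZMod 2) → ℝ := Function.update f 0 0 with hf'def
    set g' : (Fin m → ZMod 2) → ℝ := Function.update g 0 0 with hg'def
    have hSf' : (∑ u, f' u) = 0 := by
      rw [hf'def, hupdate_sum f]
      rw [hchi1] at hfA; linarith
    have hSg' : (∑ v, g' v) = 0 := by
      rw [hg'def, hupdate_sum g]
      rw [hchi1] at hgA; linarith
    have hf'sq : ∀ u, f' u ^ 2 = Function.update (fun u => f u ^ 2) 0 (0:ℝ) u := by
      intro u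
      by_cases hu : u = 0
      · subst hu; simp [hf'def]
      · rw [hf'def, Function.update_of_ne hu, Function.update_of_ne hu]
    have hg'sq : ∀ v, g' v ^ 2 = Function.update (fun v => g v ^ 2) 0 (0:ℝ) v := by
      intro v
      by_cases hv : v = 0
      · subst hv; simp [hg'def]
      · rw [hg'def, Function.update_of_ne hv, Function.update_of_ne hv]
    have hQf' : (∑ u, f' u ^ 2) = (2:ℝ)^m - 1 := by
      simp_rw [hf'sq]
      rw [hupdate_sum (fun u => f u ^ 2)]
      rw [hchi1] at hfB; linarith
    have hQg' : (∑ v, g' v ^ 2) = (2:ℝ)^m - 1 := by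
      simp_rw [hg'sq]
      rw [hupdate_sum (fun v => g v ^ 2)]
      rw [hchi1] at hgB; linarith
    have hTinv : (∑ x : (Fin m → ZMod 2) × (Fin m → ZMod 2),
          sigmaIP m b x * (f x.1 * g x.2))
        = ∑ x : (Fin m → ZMod 2) × (Fin m → ZMod 2),
            sigmaIP m b x * (f' x.1 * g' x.2) := by
      refine Finset.sum_congr rfl fun x _ => ?_
      by_cases hx : ipF2 x.1 x.2 = b
      · have h1 : x.1 ≠ 0 := by
          intro h0
          rw [h0, ipF2_zero_left, hb] at hx
          exact (by decide : (0:ZMod 2) ≠ 1) hx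
        have h2 : x.2 ≠ 0 := by
          intro h0
          rw [h0, ipF2_zero_right, hb] at hx
          exact (by decide : (0:ZMod 2) ≠ 1) hx
        rw [hf'def, hg'def, Function.update_of_ne h1, Function.update_of_ne h2]
      · rw [sigma_apply, if_neg hx]
        simp
    set Bp := ∑ u, ∑ v, chi (ipF2 u v) * f' u * g' v with hBpdef
    clear_value Bp
    have hB2 : Bp ^ 2 ≤ (2:ℝ)^m * (((2:ℝ)^m - 1) * ((2:ℝ)^m - 1)) := by
      have h0 := spectral f' g'
      rw [hQf', hQg', ← hBpdef] at h0
      calc Bp ^ 2 ≤ (2:ℝ)^m * ((2:ℝ)^m - 1) * ((2:ℝ)^m - 1) := h0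
        _ = (2:ℝ)^m * (((2:ℝ)^m - 1) * ((2:ℝ)^m - 1)) := by ring
    have hm1pos : (0:ℝ) < (2:ℝ)^m - 1 := by linarith
    have hK : (0:ℝ) < s * ((2:ℝ)^m - 1) := by positivity
    have hBQ : Bp ^ 2 ≤ (s * ((2:ℝ)^m - 1)) ^ 2 := by
      calc Bp ^ 2 ≤ (2:ℝ)^m * (((2:ℝ)^m - 1) * ((2:ℝ)^m - 1)) := hB2
        _ = (s * ((2:ℝ)^m - 1)) ^ 2 := by rw [mul_pow, hs2]; ring
    have hBb : -Bp ≤ s * ((2:ℝ)^m - 1) := le_of_sq_le_sq' (by rw [neg_pow]; simpa using hBQ) hK.le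
    have h2Nr : 2 * Nr = s ^ 2 * ((2:ℝ)^m - 1) := by rw [hNr, hchi1, hs2]; ring
    have hTv := hT f' g'
    rw [← hBpdef, hSf', hSg', zero_mul, zero_add, hchi1] at hTv
    rw [hTinv]
    have hTeq : (∑ x : (Fin m → ZMod 2) × (Fin m → ZMod 2),
        sigmaIP m b x * (f' x.1 * g' x.2))
        = (-1 * Bp) / (2 * Nr) := by
      rw [eq_div_iff (by positivity)]
      exact hTv
    rw [hTeq, div_le_div_iff₀ (by positivity) hs_pos, h2Nr]
    have hstep : -1 * Bp * s ≤ (s * ((2:ℝ)^m - 1)) * s := by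
      have := mul_le_mul_of_nonneg_right hBb hs_pos.le
      linarith [this]
    calc -1 * Bp * s ≤ (s * ((2:ℝ)^m - 1)) * s := hstep
      _ ≤ 2 * (s ^ 2 * ((2:ℝ)^m - 1)) := final1 hm1pos.le


end SR
end

section
/- Let 1 < q < ∞, let 1 ≤ p ≤ q, let q' = q/(q−1), and let c be defined by 1/c = 1/p + 1/q'. Let ρ be a bipartite distribution on U × V that is q-to-p hypercontractive. Then for every z ∈ [0,1], agr_ρ(z) ≥ (p^{1/p} · q'^{1/q'} · z)^c / c. -/
open scoped BigOperators ENNReal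

namespace SR

variable {U V X Y : Type*}

section Aux

open Finset

variable {α β ι : Type*} [Fintype α] [Fintype β]

lemma rpow_one_div_rpow {S r : ℝ} (hS : 0 ≤ S) (hr : r ≠ 0) : (S ^ (1/r)) ^ r = S := by
  rw [← Real.rpow_mul hS, one_div_mul_cancel hr, Real.rpow_one]

/-- Weighted Hölder inequality on a finite type. -/
lemma hoelder_w (μ x y : β → ℝ)
    (hμ : ∀ b, 0 ≤ μ b) (hx : ∀ b, 0 ≤ x b) (hy : ∀ b, 0 ≤ y b)
    {q q' : ℝ} (hqq : Real.HolderConjugate q q') :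
    ∑ b, μ b * (x b * y b) ≤
      (∑ b, μ b * x b ^ q) ^ (1/q) * (∑ b, μ b * y b ^ q') ^ (1/q') := by
  have hq0 : q ≠ 0 := hqq.pos.ne'
  have hq'0 : q' ≠ 0 := hqq.symm.pos.ne'
  have key : ∑ b, (μ b ^ (1/q) * x b) * (μ b ^ (1/q') * y b) ≤
      (∑ b, (μ b ^ (1/q) * x b) ^ q) ^ (1/q) * (∑ b, (μ b ^ (1/q') * y b) ^ q') ^ (1/q') :=
    Real.inner_le_Lp_mul_Lq_of_nonneg _ hqq
      (fun i _ => mul_nonneg (Real.rpow_nonneg (hμ i) _) (hx i))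
      (fun i _ => mul_nonneg (Real.rpow_nonneg (hμ i) _) (hy i))
  have e1 : ∀ b, (μ b ^ (1/q) * x b) * (μ b ^ (1/q') * y b) = μ b * (x b * y b) := by
    intro b
    have : μ b ^ (1/q) * μ b ^ (1/q') = μ b := by
      rw [← Real.rpow_add' (hμ b) (by rw [one_div, one_div, hqq.inv_add_inv_eq_one]; norm_num),
        show (1/q + 1/q' : ℝ) = 1 by rw [one_div, one_div, hqq.inv_add_inv_eq_one], Real.rpow_one]
    calc (μ b ^ (1/q) * x b) * (μ b ^ (1/q') * y b)
        = (μ b ^ (1/q) * μ b ^ (1/q')) * (x b * y b) := by ring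
      _ = μ b * (x b * y b) := by rw [this]
  have e2 : ∀ b, (μ b ^ (1/q) * x b) ^ q = μ b * x b ^ q := by
    intro b
    rw [Real.mul_rpow (Real.rpow_nonneg (hμ b) _) (hx b), ← Real.rpow_mul (hμ b),
      one_div_mul_cancel hq0, Real.rpow_one]
  have e3 : ∀ b, (μ b ^ (1/q') * y b) ^ q' = μ b * y b ^ q' := by
    intro b
    rw [Real.mul_rpow (Real.rpow_nonneg (hμ b) _) (hy b), ← Real.rpow_mul (hμ b),
      one_div_mul_cancel hq'0, Real.rpow_one]
  simp only [e1, e2, e3] at key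
  exact key

/-- Weighted two-term Minkowski inequality. -/
lemma minkowski_two (μ x y : β → ℝ)
    (hμ : ∀ b, 0 ≤ μ b) (hx : ∀ b, 0 ≤ x b) (hy : ∀ b, 0 ≤ y b)
    {r : ℝ} (hr : 1 ≤ r) :
    (∑ b, μ b * (x b + y b) ^ r) ^ (1/r) ≤
      (∑ b, μ b * x b ^ r) ^ (1/r) + (∑ b, μ b * y b ^ r) ^ (1/r) := by
  have hr0 : r ≠ 0 := by positivity
  have key : (∑ b, (μ b ^ (1/r) * x b + μ b ^ (1/r) * y b) ^ r) ^ (1/r) ≤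
      (∑ b, (μ b ^ (1/r) * x b) ^ r) ^ (1/r) + (∑ b, (μ b ^ (1/r) * y b) ^ r) ^ (1/r) :=
    Real.Lp_add_le_of_nonneg _ hr
      (fun i _ => mul_nonneg (Real.rpow_nonneg (hμ i) _) (hx i))
      (fun i _ => mul_nonneg (Real.rpow_nonneg (hμ i) _) (hy i))
  have eμ : ∀ b, (μ b ^ (1/r) : ℝ) ^ r = μ b := fun b => rpow_one_div_rpow (hμ b) hr0
  have e0 : ∀ b, (μ b ^ (1/r) * x b + μ b ^ (1/r) * y b) ^ r = μ b * (x b + y b) ^ r := by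
    intro b
    rw [← mul_add, Real.mul_rpow (Real.rpow_nonneg (hμ b) _) (add_nonneg (hx b) (hy b)), eμ]
  have e2 : ∀ b, (μ b ^ (1/r) * x b) ^ r = μ b * x b ^ r := by
    intro b
    rw [Real.mul_rpow (Real.rpow_nonneg (hμ b) _) (hx b), eμ]
  have e3 : ∀ b, (μ b ^ (1/r) * y b) ^ r = μ b * y b ^ r := by
    intro b
    rw [Real.mul_rpow (Real.rpow_nonneg (hμ b) _) (hy b), eμ]
  simp only [e0, e2, e3] at key
  exact key

/-- Pulling a nonnegative scalar out of a weighted `L^r` norm. -/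
lemma sum_rpow_smul (μ h : β → ℝ) (hμ : ∀ b, 0 ≤ μ b) (hh : ∀ b, 0 ≤ h b)
    (c : ℝ) (hc : 0 ≤ c) {r : ℝ} (hr : r ≠ 0) :
    (∑ b, μ b * (c * h b) ^ r) ^ (1/r) = c * (∑ b, μ b * h b ^ r) ^ (1/r) := by
  have e : ∀ b, μ b * (c * h b) ^ r = c ^ r * (μ b * h b ^ r) := by
    intro b; rw [Real.mul_rpow hc (hh b)]; ring
  have hS : (0:ℝ) ≤ ∑ b, μ b * h b ^ r :=
    Finset.sum_nonneg fun b _ => mul_nonneg (hμ b) (Real.rpow_nonneg (hh b) _)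
  simp only [e]
  rw [← Finset.mul_sum, Real.mul_rpow (Real.rpow_nonneg hc _) hS, ← Real.rpow_mul hc,
    mul_one_div_cancel hr, Real.rpow_one]

/-- Weighted Minkowski inequality for a finite family. -/
lemma minkowski_family [DecidableEq ι] (μ : β → ℝ) (hμ : ∀ b, 0 ≤ μ b)
    (s : Finset ι) (c : ι → ℝ) (hc : ∀ i, 0 ≤ c i)
    (h : ι → β → ℝ) (hh : ∀ i b, 0 ≤ h i b)
    {r : ℝ} (hr : 1 ≤ r) :
    (∑ b, μ b * (∑ i ∈ s, c i * h i b) ^ r) ^ (1/r)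
      ≤ ∑ i ∈ s, c i * (∑ b, μ b * h i b ^ r) ^ (1/r) := by
  have hr0 : r ≠ 0 := by positivity
  induction s using Finset.induction with
  | empty =>
      simp [Real.zero_rpow hr0, Real.zero_rpow (inv_ne_zero hr0)]
  | @insert a s ha ih =>
      simp only [Finset.sum_insert ha]
      calc (∑ b, μ b * (c a * h a b + ∑ i ∈ s, c i * h i b) ^ r) ^ (1/r)
          ≤ (∑ b, μ b * (c a * h a b) ^ r) ^ (1/r)
            + (∑ b, μ b * (∑ i ∈ s, c i * h i b) ^ r) ^ (1/r) := by
            refine minkowski_two μ _ _ hμ (fun b => mul_nonneg (hc a) (hh a b))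
              (fun b => Finset.sum_nonneg fun i _ => mul_nonneg (hc i) (hh i b)) hr
        _ ≤ c a * (∑ b, μ b * h a b ^ r) ^ (1/r)
            + ∑ i ∈ s, c i * (∑ b, μ b * h i b ^ r) ^ (1/r) := by
            rw [sum_rpow_smul μ (h a) hμ (hh a) (c a) (hc a) hr0]
            exact add_le_add le_rfl ih

end Aux
section Tensor

variable {U V X Y : Type*} [Fintype U] [Fintype V] [Fintype X] [Fintype Y]

lemma margSnd_tensor (ρ : U × V → ℝ) (σ : X × Y → ℝ) (v : V) (y : Y) :
    margSnd (tensor ρ σ) (v, y) = margSnd ρ v * margSnd σ y := by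
  unfold margSnd tensor
  rw [Fintype.sum_prod_type, Finset.sum_mul_sum]

lemma margFst_tensor (ρ : U × V → ℝ) (σ : X × Y → ℝ) (u : U) (x : X) :
    margFst (tensor ρ σ) (u, x) = margFst ρ u * margFst σ x := by
  unfold margFst tensor
  rw [Fintype.sum_prod_type, Finset.sum_mul_sum]

lemma condOp_tensor (ρ : U × V → ℝ) (σ : X × Y → ℝ) (F : U × X → ℂ) (v : V) (y : Y) :
    condOp (tensor ρ σ) F (v, y) =
      condOp ρ (fun u => condOp σ (fun x => F (u, x)) y) v := by
  unfold condOp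
  rw [margSnd_tensor, Fintype.sum_prod_type]
  refine Finset.sum_congr rfl fun u _ => ?_
  rw [Finset.mul_sum]
  refine Finset.sum_congr rfl fun x _ => ?_
  unfold tensor
  push_cast
  ring

/-- Power form of hypercontractivity. -/
lemma hyper_pow {q p : ℝ} (hq0 : 0 < q) (hp0 : 0 < p)
    (ρ : U × V → ℝ) (hρ : ∀ x, 0 ≤ ρ x) (H : Hyper ρ q p) (f : U → ℂ) :
    ∑ v, margSnd ρ v * ‖condOp ρ f v‖ ^ q ≤
      (∑ u, margFst ρ u * ‖f u‖ ^ p) ^ (q / p) := by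
  have hμV : ∀ v, 0 ≤ margSnd ρ v := fun v => Finset.sum_nonneg fun u _ => hρ _
  have hμU : ∀ u, 0 ≤ margFst ρ u := fun u => Finset.sum_nonneg fun v _ => hρ _
  have hA : (0:ℝ) ≤ ∑ v, margSnd ρ v * ‖condOp ρ f v‖ ^ q :=
    Finset.sum_nonneg fun v _ => mul_nonneg (hμV v) (Real.rpow_nonneg (norm_nonneg _) _)
  have hB : (0:ℝ) ≤ ∑ u, margFst ρ u * ‖f u‖ ^ p :=
    Finset.sum_nonneg fun u _ => mul_nonneg (hμU u) (Real.rpow_nonneg (norm_nonneg _) _)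
  have h := H f
  unfold lnorm at h
  calc ∑ v, margSnd ρ v * ‖condOp ρ f v‖ ^ q
      = ((∑ v, margSnd ρ v * ‖condOp ρ f v‖ ^ q) ^ (1/q)) ^ q :=
        (rpow_one_div_rpow hA hq0.ne').symm
    _ ≤ (((∑ u, margFst ρ u * ‖f u‖ ^ p) ^ (1/p)) : ℝ) ^ q :=
        Real.rpow_le_rpow (Real.rpow_nonneg hA _) h hq0.le
    _ = (∑ u, margFst ρ u * ‖f u‖ ^ p) ^ (q / p) := by
        rw [← Real.rpow_mul hB]
        congr 1
        field_simp

/-- Hypercontractivity is preserved by tensoring. -/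
lemma hyper_tensor {q p : ℝ} (hq : 1 < q) (hp : 1 ≤ p) (hpq : p ≤ q)
    (ρ : U × V → ℝ) (σ : X × Y → ℝ) (hρ : ∀ x, 0 ≤ ρ x) (hσ : ∀ x, 0 ≤ σ x)
    (Hρ : Hyper ρ q p) (Hσ : Hyper σ q p) : Hyper (tensor ρ σ) q p := by
  intro F
  have hp0 : (0:ℝ) < p := lt_of_lt_of_le zero_lt_one hp
  have hq0 : (0:ℝ) < q := lt_trans zero_lt_one hq
  have hr1 : (1:ℝ) ≤ q / p := (one_le_div hp0).mpr hpq
  have hr0 : (0:ℝ) < q / p := lt_of_lt_of_le zero_lt_one hr1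
  have hμV : ∀ v, 0 ≤ margSnd ρ v := fun v => Finset.sum_nonneg fun u _ => hρ _
  have hμY : ∀ y, 0 ≤ margSnd σ y := fun y => Finset.sum_nonneg fun x _ => hσ _
  have hμU : ∀ u, 0 ≤ margFst ρ u := fun u => Finset.sum_nonneg fun v _ => hρ _
  have hμX : ∀ x, 0 ≤ margFst σ x := fun x => Finset.sum_nonneg fun y _ => hσ _
  -- Step 0 : rewrite the `q`-norm sum as an iterated sum
  have step0 : ∑ vy : V × Y, margSnd (tensor ρ σ) vy *
        ‖condOp (tensor ρ σ) F vy‖ ^ q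
      = ∑ y, margSnd σ y * ∑ v, margSnd ρ v *
          ‖condOp ρ (fun u => condOp σ (fun x => F (u, x)) y) v‖ ^ q := by
    rw [Fintype.sum_prod_type, Finset.sum_comm]
    refine Finset.sum_congr rfl fun y _ => ?_
    rw [Finset.mul_sum]
    refine Finset.sum_congr rfl fun v _ => ?_
    rw [margSnd_tensor, condOp_tensor]
    ring
  -- abbreviations as plain sums
  have hSp0 : ∀ y, (0:ℝ) ≤ ∑ u, margFst ρ u *
      ‖condOp σ (fun x => F (u, x)) y‖ ^ p :=
    fun y => Finset.sum_nonneg fun u _ =>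
      mul_nonneg (hμU u) (Real.rpow_nonneg (norm_nonneg _) _)
  -- Step 1 : apply hypercontractivity of ρ fiberwise
  have step1 : ∑ y, margSnd σ y * ∑ v, margSnd ρ v *
        ‖condOp ρ (fun u => condOp σ (fun x => F (u, x)) y) v‖ ^ q
      ≤ ∑ y, margSnd σ y * (∑ u, margFst ρ u *
          ‖condOp σ (fun x => F (u, x)) y‖ ^ p) ^ (q / p) :=
    Finset.sum_le_sum fun y _ => mul_le_mul_of_nonneg_left
      (hyper_pow hq0 hp0 ρ hρ Hρ _) (hμY y)
  -- Step 2 : Minkowski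
  have step2 : (∑ y, margSnd σ y * (∑ u, margFst ρ u *
        ‖condOp σ (fun x => F (u, x)) y‖ ^ p) ^ (q / p)) ^ (1 / (q/p))
      ≤ ∑ u, margFst ρ u * (∑ y, margSnd σ y *
          ‖condOp σ (fun x => F (u, x)) y‖ ^ q) ^ (1 / (q/p)) := by
    classical
    have := minkowski_family (margSnd σ) hμY Finset.univ (fun u => margFst ρ u) hμU
      (fun u y => ‖condOp σ (fun x => F (u, x)) y‖ ^ p)
      (fun u y => Real.rpow_nonneg (norm_nonneg _) _) hr1
    have hexp : ∀ u y, (‖condOp σ (fun x => F (u, x)) y‖ ^ p) ^ (q/p)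
        = ‖condOp σ (fun x => F (u, x)) y‖ ^ q := by
      intro u y
      rw [← Real.rpow_mul (norm_nonneg _)]
      congr 1
      field_simp
    simp only [hexp] at this
    exact this
  -- Step 3 : apply hypercontractivity of σ fiberwise
  have step3 : ∑ u, margFst ρ u * (∑ y, margSnd σ y *
        ‖condOp σ (fun x => F (u, x)) y‖ ^ q) ^ (1 / (q/p))
      ≤ ∑ u, margFst ρ u * ∑ x, margFst σ x * ‖F (u, x)‖ ^ p := by
    refine Finset.sum_le_sum fun u _ => mul_le_mul_of_nonneg_left ?_ (hμU u)
    have h1 := hyper_pow hq0 hp0 σ hσ Hσ (fun x => F (u, x))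
    have hAq : (0:ℝ) ≤ ∑ y, margSnd σ y *
        ‖condOp σ (fun x => F (u, x)) y‖ ^ q :=
      Finset.sum_nonneg fun y _ =>
        mul_nonneg (hμY y) (Real.rpow_nonneg (norm_nonneg _) _)
    calc (∑ y, margSnd σ y * ‖condOp σ (fun x => F (u, x)) y‖ ^ q) ^ (1 / (q/p))
        ≤ (((∑ x, margFst σ x * ‖F (u, x)‖ ^ p) ^ (q/p)) : ℝ) ^ (1 / (q/p)) :=
          Real.rpow_le_rpow hAq h1 (by positivity)
      _ = ∑ x, margFst σ x * ‖F (u, x)‖ ^ p := by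
          have hS : (0:ℝ) ≤ ∑ x, margFst σ x * ‖F (u, x)‖ ^ p :=
            Finset.sum_nonneg fun x _ =>
              mul_nonneg (hμX x) (Real.rpow_nonneg (norm_nonneg _) _)
          rw [← Real.rpow_mul hS, mul_one_div_cancel hr0.ne', Real.rpow_one]
  -- Step 4 : the marginal of the tensor
  have step4 : ∑ u, margFst ρ u * ∑ x, margFst σ x * ‖F (u, x)‖ ^ p
      = ∑ ux : U × X, margFst (tensor ρ σ) ux * ‖F ux‖ ^ p := by
    rw [Fintype.sum_prod_type]
    refine Finset.sum_congr rfl fun u _ => ?_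
    rw [Finset.mul_sum]
    refine Finset.sum_congr rfl fun x _ => ?_
    rw [margFst_tensor]
    ring
  -- nonnegativity of intermediate quantities
  have hN : (0:ℝ) ≤ ∑ vy : V × Y, margSnd (tensor ρ σ) vy *
      ‖condOp (tensor ρ σ) F vy‖ ^ q := by
    refine Finset.sum_nonneg fun vy _ => mul_nonneg ?_ (Real.rpow_nonneg (norm_nonneg _) _)
    exact Finset.sum_nonneg fun ux _ => mul_nonneg (hρ _) (hσ _) |>.trans_eq rfl
  have hA0 : (0:ℝ) ≤ ∑ y, margSnd σ y * (∑ u, margFst ρ u *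
      ‖condOp σ (fun x => F (u, x)) y‖ ^ p) ^ (q / p) :=
    Finset.sum_nonneg fun y _ => mul_nonneg (hμY y) (Real.rpow_nonneg (hSp0 y) _)
  have hB0 : (0:ℝ) ≤ ∑ u, margFst ρ u * (∑ y, margSnd σ y *
      ‖condOp σ (fun x => F (u, x)) y‖ ^ q) ^ (1 / (q/p)) :=
    Finset.sum_nonneg fun u _ => mul_nonneg (hμU u) (Real.rpow_nonneg
      (Finset.sum_nonneg fun y _ =>
        mul_nonneg (hμY y) (Real.rpow_nonneg (norm_nonneg _) _)) _)
  -- put everything together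
  unfold lnorm
  rw [step0, ← step4]
  calc (∑ y, margSnd σ y * ∑ v, margSnd ρ v *
        ‖condOp ρ (fun u => condOp σ (fun x => F (u, x)) y) v‖ ^ q) ^ (1/q)
      ≤ (∑ y, margSnd σ y * (∑ u, margFst ρ u *
          ‖condOp σ (fun x => F (u, x)) y‖ ^ p) ^ (q / p)) ^ (1/q) := by
        refine Real.rpow_le_rpow ?_ step1 (by positivity)
        rw [step0] at hN; exact hN
    _ = ((∑ y, margSnd σ y * (∑ u, margFst ρ u *
          ‖condOp σ (fun x => F (u, x)) y‖ ^ p) ^ (q / p)) ^ (1/(q/p))) ^ (1/p) := by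
        rw [← Real.rpow_mul hA0]
        congr 1
        field_simp
    _ ≤ (∑ u, margFst ρ u * (∑ y, margSnd σ y *
          ‖condOp σ (fun x => F (u, x)) y‖ ^ q) ^ (1 / (q/p))) ^ (1/p) :=
        Real.rpow_le_rpow (Real.rpow_nonneg hA0 _) step2 (by positivity)
    _ ≤ (∑ u, margFst ρ u * ∑ x, margFst σ x * ‖F (u, x)‖ ^ p) ^ (1/p) :=
        Real.rpow_le_rpow hB0 step3 (by positivity)

end Tensor
section IidHyper

/-- Transport of hypercontractivity along equivalences of the ground sets. -/
lemma hyper_comap {U V U' V' : Type*} [Fintype U] [Fintype V] [Fintype U'] [Fintype V']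
    (eU : U' ≃ U) (eV : V' ≃ V) (ρ : U × V → ℝ) {q p : ℝ}
    (H : Hyper ρ q p) : Hyper (fun x : U' × V' => ρ (eU x.1, eV x.2)) q p := by
  intro f
  have hmS : ∀ v', margSnd (fun x : U' × V' => ρ (eU x.1, eV x.2)) v' = margSnd ρ (eV v') :=
    fun v' => eU.sum_comp (fun u => ρ (u, eV v'))
  have hmF : ∀ u', margFst (fun x : U' × V' => ρ (eU x.1, eV x.2)) u' = margFst ρ (eU u') :=
    fun u' => eV.sum_comp (fun v => ρ (eU u', v))
  have hcond : ∀ v', condOp (fun x : U' × V' => ρ (eU x.1, eV x.2)) f v'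
      = condOp ρ (fun u => f (eU.symm u)) (eV v') := by
    intro v'
    unfold condOp
    rw [hmS]
    rw [← eU.sum_comp (fun u => ((ρ (u, eV v') / margSnd ρ (eV v') : ℝ) : ℂ) * f (eU.symm u))]
    simp
  have h1 : lnorm (margSnd (fun x : U' × V' => ρ (eU x.1, eV x.2))) q
        (condOp (fun x : U' × V' => ρ (eU x.1, eV x.2)) f)
      = lnorm (margSnd ρ) q (condOp ρ (fun u => f (eU.symm u))) := by
    unfold lnorm
    congr 1
    rw [← eV.sum_comp (fun v => margSnd ρ v *
        ‖condOp ρ (fun u => f (eU.symm u)) v‖ ^ q)]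
    exact Finset.sum_congr rfl fun v' _ => by rw [hmS, hcond]
  have h2 : lnorm (margFst (fun x : U' × V' => ρ (eU x.1, eV x.2))) p f
      = lnorm (margFst ρ) p (fun u => f (eU.symm u)) := by
    unfold lnorm
    congr 1
    rw [← eU.sum_comp (fun u => margFst ρ u * ‖f (eU.symm u)‖ ^ p)]
    refine Finset.sum_congr rfl fun u' _ => by rw [hmF]; simp
  rw [h1, h2]
  exact H _

/-- Splitting off the first coordinate of a tuple. -/
def finSuccSplit (W : Type*) (ℓ : ℕ) : (Fin (ℓ+1) → W) ≃ W × (Fin ℓ → W) where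
  toFun a := (a 0, fun i => a i.succ)
  invFun p := Fin.cons p.1 p.2
  left_inv a := by
    funext i
    refine Fin.cases ?_ ?_ i <;> simp
  right_inv p := by simp

lemma iid_nonneg {U V : Type*} (ρ : U × V → ℝ) (hρ : ∀ x, 0 ≤ ρ x) (ℓ : ℕ)
    (x : (Fin ℓ → U) × (Fin ℓ → V)) : 0 ≤ iid ρ ℓ x :=
  Finset.prod_nonneg fun i _ => hρ _

lemma hyper_iid {U V : Type*} [Fintype U] [Fintype V] {q p : ℝ}
    (hq : 1 < q) (hp : 1 ≤ p) (hpq : p ≤ q)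
    (ρ : U × V → ℝ) (hρ : ∀ x, 0 ≤ ρ x) (H : Hyper ρ q p) :
    ∀ ℓ : ℕ, Hyper (iid ρ ℓ) q p := by
  have hp0 : (0:ℝ) < p := lt_of_lt_of_le zero_lt_one hp
  have hq0 : (0:ℝ) < q := lt_trans zero_lt_one hq
  intro ℓ
  induction ℓ with
  | zero =>
      intro f
      have hmS : ∀ v : Fin 0 → V, margSnd (iid ρ 0) v = 1 := by
        intro v; unfold margSnd iid; simp
      have hmF : ∀ u : Fin 0 → U, margFst (iid ρ 0) u = 1 := by
        intro u; unfold margFst iid; simp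
      have hcond : condOp (iid ρ 0) f default = f default := by
        unfold condOp
        rw [Fintype.sum_unique]
        rw [hmS]
        simp [iid]
      have h1 : lnorm (margSnd (iid ρ 0)) q (condOp (iid ρ 0) f) = ‖f default‖ := by
        unfold lnorm
        rw [Fintype.sum_unique, hmS, hcond, one_mul, ← Real.rpow_mul (norm_nonneg _),
          mul_one_div_cancel hq0.ne', Real.rpow_one]
      have h2 : lnorm (margFst (iid ρ 0)) p f = ‖f default‖ := by
        unfold lnorm
        rw [Fintype.sum_unique, hmF, one_mul, ← Real.rpow_mul (norm_nonneg _),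
          mul_one_div_cancel hp0.ne', Real.rpow_one]
      rw [h1, h2]
  | succ ℓ ih =>
      have htens := hyper_tensor hq hp hpq ρ (iid ρ ℓ) hρ (iid_nonneg ρ hρ ℓ) H ih
      have hcomap := hyper_comap (finSuccSplit U ℓ) (finSuccSplit V ℓ)
        (tensor ρ (iid ρ ℓ)) htens
      have hfun : iid ρ (ℓ+1) = fun x : (Fin (ℓ+1) → U) × (Fin (ℓ+1) → V) =>
          tensor ρ (iid ρ ℓ) (finSuccSplit U ℓ x.1, finSuccSplit V ℓ x.2) := by
        funext x
        unfold iid tensor finSuccSplit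
        simp [Fin.prod_univ_succ]
      rw [hfun]
      exact hcomap

end IidHyper
section Protocol

/-- The core inequality: any `[0,1]`-valued protocol for a hypercontractive distribution
has success probability at most `a^{1/p} b^{1/q'}`. -/
lemma protocol_bound {A B : Type*} [Fintype A] [Fintype B]
    {q p q' : ℝ} (hq : 1 < q) (hp : 1 ≤ p) (hq' : q' = q / (q - 1))
    (σ : A × B → ℝ) (hσ : ∀ x, 0 ≤ σ x) (H : Hyper σ q p)
    (f : A → ℝ) (g : B → ℝ) (hf : ∀ a, f a ∈ Set.Icc (0:ℝ) 1) (hg : ∀ b, g b ∈ Set.Icc (0:ℝ) 1) :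
    ∑ x : A × B, σ x * (f x.1 * g x.2) ≤
      (∑ x : A × B, σ x * f x.1) ^ (1/p) * (∑ x : A × B, σ x * g x.2) ^ (1/q') := by
  have hp0 : (0:ℝ) < p := lt_of_lt_of_le zero_lt_one hp
  have hq0 : (0:ℝ) < q := lt_trans zero_lt_one hq
  have hqq : Real.HolderConjugate q q' := hq' ▸ Real.HolderConjugate.conjExponent hq
  have hq'1 : 1 ≤ q' := hqq.symm.lt.le
  have hq'0 : (0:ℝ) < q' := hqq.symm.pos
  have hμB : ∀ b, 0 ≤ margSnd σ b := fun b => Finset.sum_nonneg fun a _ => hσ _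
  have hμA : ∀ a, 0 ≤ margFst σ a := fun a => Finset.sum_nonneg fun b _ => hσ _
  have hzero : ∀ a b, margSnd σ b = 0 → σ (a, b) = 0 := by
    intro a b h
    have := (Finset.sum_eq_zero_iff_of_nonneg (fun a _ => hσ (a, b))).mp h
    exact this a (Finset.mem_univ a)
  -- real conditional expectation
  set T : B → ℝ := fun b => ∑ a, σ (a, b) / margSnd σ b * f a with hT
  have hT0 : ∀ b, 0 ≤ T b := fun b => Finset.sum_nonneg fun a _ =>
    mul_nonneg (div_nonneg (hσ _) (hμB b)) (hf a).1
  -- rewrite success probability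
  have hsucc : ∑ x : A × B, σ x * (f x.1 * g x.2) = ∑ b, margSnd σ b * (T b * g b) := by
    rw [Fintype.sum_prod_type_right]
    refine Finset.sum_congr rfl fun b _ => ?_
    rw [hT, Finset.sum_mul, Finset.mul_sum]
    refine Finset.sum_congr rfl fun a _ => ?_
    by_cases hb : margSnd σ b = 0
    · rw [hzero a b hb, hb]; ring
    · field_simp
  -- marginal identities for cost
  have hcostf : ∑ x : A × B, σ x * f x.1 = ∑ a, margFst σ a * f a := by
    rw [Fintype.sum_prod_type]
    exact Finset.sum_congr rfl fun a _ => by rw [margFst, Finset.sum_mul]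
  have hcostg : ∑ x : A × B, σ x * g x.2 = ∑ b, margSnd σ b * g b := by
    rw [Fintype.sum_prod_type_right]
    exact Finset.sum_congr rfl fun b _ => by rw [margSnd, Finset.sum_mul]
  -- Hölder
  have hold : ∑ b, margSnd σ b * (T b * g b) ≤
      (∑ b, margSnd σ b * T b ^ q) ^ (1/q) * (∑ b, margSnd σ b * g b ^ q') ^ (1/q') :=
    hoelder_w (margSnd σ) T g hμB hT0 (fun b => (hg b).1) hqq
  -- hypercontractivity: the q-norm of T is at most the p-norm of f
  have habs : ∀ b, ‖condOp σ (fun a => (f a : ℂ)) b‖ = T b := by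
    intro b
    have : condOp σ (fun a => (f a : ℂ)) b = ((T b : ℝ) : ℂ) := by
      unfold condOp
      rw [hT]
      push_cast
      rfl
    rw [this, Complex.norm_real, Real.norm_eq_abs, abs_of_nonneg (hT0 b)]
  have hhyp := H (fun a => (f a : ℂ))
  unfold lnorm at hhyp
  simp only [habs, Complex.norm_real, Real.norm_eq_abs] at hhyp
  have habsf : ∀ a, |f a| = f a := fun a => abs_of_nonneg (hf a).1
  simp only [habsf] at hhyp
  -- pointwise power bounds
  have hfp : ∑ a, margFst σ a * f a ^ p ≤ ∑ a, margFst σ a * f a := by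
    refine Finset.sum_le_sum fun a _ => mul_le_mul_of_nonneg_left ?_ (hμA a)
    rcases eq_or_lt_of_le (hf a).1 with h0 | h0
    · rw [← h0, Real.zero_rpow hp0.ne']
    · calc f a ^ p ≤ f a ^ (1:ℝ) := Real.rpow_le_rpow_of_exponent_ge h0 (hf a).2 hp
        _ = f a := Real.rpow_one _
  have hgq : ∑ b, margSnd σ b * g b ^ q' ≤ ∑ b, margSnd σ b * g b := by
    refine Finset.sum_le_sum fun b _ => mul_le_mul_of_nonneg_left ?_ (hμB b)
    rcases eq_or_lt_of_le (hg b).1 with h0 | h0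
    · rw [← h0, Real.zero_rpow hq'0.ne']
    · calc g b ^ q' ≤ g b ^ (1:ℝ) := Real.rpow_le_rpow_of_exponent_ge h0 (hg b).2 hq'1
        _ = g b := Real.rpow_one _
  -- nonnegativity
  have hTq0 : (0:ℝ) ≤ ∑ b, margSnd σ b * T b ^ q :=
    Finset.sum_nonneg fun b _ => mul_nonneg (hμB b) (Real.rpow_nonneg (hT0 b) _)
  have hfp0 : (0:ℝ) ≤ ∑ a, margFst σ a * f a ^ p :=
    Finset.sum_nonneg fun a _ => mul_nonneg (hμA a) (Real.rpow_nonneg (hf a).1 _)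
  have hgq0 : (0:ℝ) ≤ ∑ b, margSnd σ b * g b ^ q' :=
    Finset.sum_nonneg fun b _ => mul_nonneg (hμB b) (Real.rpow_nonneg (hg b).1 _)
  calc ∑ x : A × B, σ x * (f x.1 * g x.2)
      = ∑ b, margSnd σ b * (T b * g b) := hsucc
    _ ≤ (∑ b, margSnd σ b * T b ^ q) ^ (1/q) * (∑ b, margSnd σ b * g b ^ q') ^ (1/q') := hold
    _ ≤ (∑ a, margFst σ a * f a ^ p) ^ (1/p) * (∑ b, margSnd σ b * g b ^ q') ^ (1/q') := by
        refine mul_le_mul_of_nonneg_right ?_ (Real.rpow_nonneg hgq0 _)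
        exact hhyp
    _ ≤ (∑ a, margFst σ a * f a) ^ (1/p) * (∑ b, margSnd σ b * g b) ^ (1/q') := by
        refine mul_le_mul (Real.rpow_le_rpow hfp0 hfp (by positivity))
          (Real.rpow_le_rpow hgq0 hgq (by positivity)) (Real.rpow_nonneg hgq0 _)
          (Real.rpow_nonneg (le_trans hfp0 hfp) _)
    _ = (∑ x : A × B, σ x * f x.1) ^ (1/p) * (∑ x : A × B, σ x * g x.2) ^ (1/q') := by
        rw [hcostf, hcostg]

end Protocol
theorem stmt15 {U V : Type} [Fintype U] [Fintype V] [Nonempty U] [Nonempty V]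
    (q p : ℝ) (hq : 1 < q) (hp : 1 ≤ p) (hpq : p ≤ q)
    (q' c : ℝ) (hq' : q' = q / (q - 1)) (hc : 1 / c = 1 / p + 1 / q')
    (ρ : U × V → ℝ) (hρ : IsDist ρ) (hhyp : Hyper ρ q p)
    (z : ℝ) (hz : z ∈ Set.Icc (0:ℝ) 1) :
    (p ^ (1/p) * q' ^ (1/q') * z) ^ c / c ≤ agr ρ z := by
  obtain ⟨hz0, hz1⟩ := hz
  have hp0 : (0:ℝ) < p := lt_of_lt_of_le zero_lt_one hp
  have hq0 : (0:ℝ) < q := lt_trans zero_lt_one hq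
  have hqq : Real.HolderConjugate q q' := hq' ▸ Real.HolderConjugate.conjExponent hq
  have hq'0 : (0:ℝ) < q' := hqq.symm.pos
  have hc0 : (0:ℝ) < c := by
    have h1 : (0:ℝ) < 1/c := by rw [hc]; positivity
    exact one_div_pos.mp h1
  unfold agr
  refine le_csInf ?_ ?_
  · refine ⟨2, 0, fun _ => 1, fun _ => 1, fun x => ⟨zero_le_one, le_rfl⟩,
      fun y => ⟨zero_le_one, le_rfl⟩, ?_, ?_⟩
    · simpa [Fintype.sum_unique, iid] using hz1
    · norm_num [Fintype.sum_unique, iid]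
  · rintro b ⟨ℓ, f, g, hf, hg, hzle, rfl⟩
    set a1 := ∑ x : (Fin ℓ → U) × (Fin ℓ → V), iid ρ ℓ x * f x.1 with ha1
    set b1 := ∑ x : (Fin ℓ → U) × (Fin ℓ → V), iid ρ ℓ x * g x.2 with hb1
    have hσ : ∀ x, 0 ≤ iid ρ ℓ x := iid_nonneg ρ hρ.1 ℓ
    have hyi := hyper_iid hq hp hpq ρ hρ.1 hhyp ℓ
    have key : z ≤ a1 ^ (1/p) * b1 ^ (1/q') :=
      le_trans hzle (protocol_bound hq hp hq' (iid ρ ℓ) hσ hyi f g hf hg)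
    have ha0 : 0 ≤ a1 := Finset.sum_nonneg fun x _ => mul_nonneg (hσ x) (hf x.1).1
    have hb0 : 0 ≤ b1 := Finset.sum_nonneg fun x _ => mul_nonneg (hσ x) (hg x.2).1
    have hK : (0:ℝ) ≤ p ^ (1/p) * q' ^ (1/q') :=
      mul_nonneg (Real.rpow_nonneg hp0.le _) (Real.rpow_nonneg hq'0.le _)
    have hwsum : c/p + c/q' = 1 := by
      have e : c/p + c/q' = c * (1/p + 1/q') := by ring
      rw [e, ← hc, mul_one_div, div_self hc0.ne']
    have hpa : (0:ℝ) ≤ p * a1 := mul_nonneg hp0.le ha0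
    have hqb : (0:ℝ) ≤ q' * b1 := mul_nonneg hq'0.le hb0
    have step1 : (p ^ (1/p) * q' ^ (1/q') * z) ^ c ≤
        (p ^ (1/p) * q' ^ (1/q') * (a1 ^ (1/p) * b1 ^ (1/q'))) ^ c :=
      Real.rpow_le_rpow (mul_nonneg hK hz0) (mul_le_mul_of_nonneg_left key hK) hc0.le
    have step2 : p ^ (1/p) * q' ^ (1/q') * (a1 ^ (1/p) * b1 ^ (1/q'))
        = (p * a1) ^ (1/p) * (q' * b1) ^ (1/q') := by
      rw [Real.mul_rpow hp0.le ha0, Real.mul_rpow hq'0.le hb0]; ring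
    have step3 : ((p * a1) ^ (1/p) * (q' * b1) ^ (1/q')) ^ c
        = (p * a1) ^ (c/p) * (q' * b1) ^ (c/q') := by
      rw [Real.mul_rpow (Real.rpow_nonneg hpa _) (Real.rpow_nonneg hqb _),
        ← Real.rpow_mul hpa, ← Real.rpow_mul hqb]
      congr 1 <;> · congr 1; ring
    have step4 : (p * a1) ^ (c/p) * (q' * b1) ^ (c/q') ≤ (c/p) * (p*a1) + (c/q') * (q'*b1) :=
      Real.geom_mean_le_arith_mean2_weighted (by positivity) (by positivity) hpa hqb hwsum
    have step5 : (c/p) * (p*a1) + (c/q') * (q'*b1) = c * (a1 + b1) := by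
      field_simp
    rw [div_le_iff₀ hc0]
    calc (p ^ (1/p) * q' ^ (1/q') * z) ^ c
        ≤ (p ^ (1/p) * q' ^ (1/q') * (a1 ^ (1/p) * b1 ^ (1/q'))) ^ c := step1
      _ = ((p * a1) ^ (1/p) * (q' * b1) ^ (1/q')) ^ c := by rw [step2]
      _ = (p * a1) ^ (c/p) * (q' * b1) ^ (c/q') := step3
      _ ≤ (c/p) * (p*a1) + (c/q') * (q'*b1) := step4
      _ = c * (a1 + b1) := step5
      _ = (a1 + b1) * c := mul_comm _ _

end SR
end

section
/- The bipartite distribution ρ_disj (uniform on {(0,0),(0,1),(1,0)} ⊆ {0,1} × {0,1}) is 3-to-3/2 hypercontractive. Concretely, for every function f : {0,1} → ℂ, ((2/3)·|(f(0)+f(1))/2|³ + (1/3)·|f(0)|³)^{1/3} ≤ ((2/3)·|f(0)|^{3/2} + (1/3)·|f(1)|^{3/2})^{2/3}. Equivalently, for all real numbers α, β ≥ 0: ((2/3)·α^{3/2} + (1/3)·β^{3/2})² − (2/3)·((α+β)/2)³ − (1/3)·α³ = (√α − √β)⁴·(α + 4√(αβ) + β)/36 ≥ 0. -/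
open scoped BigOperators ENNReal

namespace SR

variable {U V X Y : Type*}

lemma key_core' (α β a b : ℝ) (ha : a^2 = α) (hb : b^2 = β) :
    ((2/3) * a^3 + (1/3) * b^3)^2 - (2/3)*((α+β)/2)^3 - (1/3)*α^3
      = (a-b)^4*(α + 4*(a*b) + β)/36 := by subst ha; subst hb; ring

lemma rpow_three_halves' {x : ℝ} (hx : 0 ≤ x) : x ^ ((3:ℝ)/2) = Real.sqrt x ^ 3 := by
  rw [Real.sqrt_eq_rpow, ← Real.rpow_natCast (x ^ ((1:ℝ)/2)) 3, ← Real.rpow_mul hx]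
  norm_num

lemma key_eq' (α β : ℝ) (hα : 0 ≤ α) (hβ : 0 ≤ β) :
    ((2/3) * α ^ ((3:ℝ)/2) + (1/3) * β ^ ((3:ℝ)/2)) ^ 2
        - (2/3) * ((α + β)/2) ^ 3 - (1/3) * α ^ 3
      = (Real.sqrt α - Real.sqrt β) ^ 4 * (α + 4 * Real.sqrt (α * β) + β) / 36 := by
  rw [rpow_three_halves' hα, rpow_three_halves' hβ, Real.sqrt_mul hα]
  exact key_core' α β _ _ (Real.sq_sqrt hα) (Real.sq_sqrt hβ)

lemma key_nonneg' (α β : ℝ) (hα : 0 ≤ α) (hβ : 0 ≤ β) :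
    0 ≤ (Real.sqrt α - Real.sqrt β) ^ 4 * (α + 4 * Real.sqrt (α * β) + β) / 36 := by
  have : 0 ≤ Real.sqrt (α * β) := Real.sqrt_nonneg _
  positivity

lemma key_ineq' (α β M : ℝ) (hα : 0 ≤ α) (hβ : 0 ≤ β) (hM : 0 ≤ M) (hMle : M ≤ (α+β)/2) :
    ((2/3)*M^(3:ℝ) + (1/3)*α^(3:ℝ))^((1:ℝ)/3)
      ≤ ((2/3)*α^((3:ℝ)/2)+(1/3)*β^((3:ℝ)/2))^((2:ℝ)/3) := by
  have hY : 0 ≤ (2/3)*α^((3:ℝ)/2)+(1/3)*β^((3:ℝ)/2) := by positivity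
  set Y := (2/3)*α^((3:ℝ)/2)+(1/3)*β^((3:ℝ)/2) with hYdef
  have hM3 : M^(3:ℝ) = M^(3:ℕ) := by
    rw [show (3:ℝ) = ((3:ℕ):ℝ) by norm_num, Real.rpow_natCast]
  have hα3 : α^(3:ℝ) = α^(3:ℕ) := by
    rw [show (3:ℝ) = ((3:ℕ):ℝ) by norm_num, Real.rpow_natCast]
  have hX : 0 ≤ (2/3)*M^(3:ℝ) + (1/3)*α^(3:ℝ) := by
    rw [hM3, hα3]; positivity
  have hRHSnn := key_nonneg' α β hα hβ
  have hkey := key_eq' α β hα hβ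
  have hpow : M^(3:ℕ) ≤ ((α+β)/2)^(3:ℕ) := pow_le_pow_left₀ hM hMle 3
  have hXY : (2/3)*M^(3:ℝ) + (1/3)*α^(3:ℝ) ≤ Y^2 := by
    rw [hM3, hα3, hYdef]; nlinarith [hkey, hRHSnn, hpow]
  calc ((2/3)*M^(3:ℝ) + (1/3)*α^(3:ℝ))^((1:ℝ)/3)
      ≤ (Y^2)^((1:ℝ)/3) := Real.rpow_le_rpow hX hXY (by norm_num)
    _ = Y^((2:ℝ)/3) := by
        rw [show (Y^2 : ℝ) = Y^((2:ℕ):ℝ) by rw [Real.rpow_natCast],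
          ← Real.rpow_mul hY]
        norm_num

lemma part2' (f : Bool → ℂ) :
    ((2/3) * ‖(f false + f true) / 2‖ ^ (3:ℝ)
        + (1/3) * ‖f false‖ ^ (3:ℝ)) ^ ((1:ℝ)/3)
      ≤ ((2/3) * ‖f false‖ ^ ((3:ℝ)/2)
        + (1/3) * ‖f true‖ ^ ((3:ℝ)/2)) ^ ((2:ℝ)/3) := by
  apply key_ineq' _ _ _ (norm_nonneg _) (norm_nonneg _) (norm_nonneg _)
  rw [norm_div]
  simp only [Complex.norm_two]
  have := norm_add_le (f false) (f true)
  linarith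

lemma part1' : Hyper rhoDisj 3 (3/2) := by
  intro f
  have h2 := part2' f
  have e1 : lnorm (margSnd rhoDisj) 3 (condOp rhoDisj f)
      = ((2/3) * ‖(f false + f true) / 2‖ ^ (3:ℝ)
        + (1/3) * ‖f false‖ ^ (3:ℝ)) ^ ((1:ℝ)/3) := by
    simp only [lnorm, condOp, margSnd, rhoDisj, Fintype.sum_bool]
    norm_num
    rw [show ((1:ℂ)/2 * f true + 1/2 * f false) = (f false + f true)/2 by ring, norm_div]
    simp only [Complex.norm_two]
    congr 1
    ring
  have e2 : lnorm (margFst rhoDisj) (3/2) f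
      = ((2/3) * ‖f false‖ ^ ((3:ℝ)/2)
        + (1/3) * ‖f true‖ ^ ((3:ℝ)/2)) ^ ((2:ℝ)/3) := by
    simp only [lnorm, margFst, rhoDisj, Fintype.sum_bool]
    norm_num
    congr 1
    ring
  rw [e1, e2]
  exact h2


theorem stmt17 :
    Hyper rhoDisj 3 (3/2)
    ∧ (∀ f : Bool → ℂ,
        ((2/3) * ‖(f false + f true) / 2‖ ^ (3:ℝ)
            + (1/3) * ‖f false‖ ^ (3:ℝ)) ^ ((1:ℝ)/3)
          ≤ ((2/3) * ‖f false‖ ^ ((3:ℝ)/2)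
            + (1/3) * ‖f true‖ ^ ((3:ℝ)/2)) ^ ((2:ℝ)/3))
    ∧ (∀ α β : ℝ, 0 ≤ α → 0 ≤ β →
        ((2/3) * α ^ ((3:ℝ)/2) + (1/3) * β ^ ((3:ℝ)/2)) ^ 2
            - (2/3) * ((α + β)/2) ^ 3 - (1/3) * α ^ 3
          = (Real.sqrt α - Real.sqrt β) ^ 4 * (α + 4 * Real.sqrt (α * β) + β) / 36
        ∧ 0 ≤ (Real.sqrt α - Real.sqrt β) ^ 4 * (α + 4 * Real.sqrt (α * β) + β) / 36) := by
  refine ⟨part1', part2', fun α β hα hβ => ⟨key_eq' α β hα hβ, key_nonneg' α β hα hβ⟩⟩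

end SR
end

section
/- For every real p with 0 < p < 1, the agreement complexity of ρ_disj satisfies agr_{ρ_disj}(p) ≤ 6 · p^{log_6 3}. -/
open scoped BigOperators ENNReal

namespace SR

variable {U V X Y : Type*}

-- auxiliary lemmas

lemma rhoDisj_nonneg (x : Bool × Bool) : 0 ≤ rhoDisj x := by
  unfold rhoDisj; split <;> norm_num

lemma iid_rhoDisj_nonneg (ℓ : ℕ) (x : (Fin ℓ → Bool) × (Fin ℓ → Bool)) :
    0 ≤ iid rhoDisj ℓ x :=
  Finset.prod_nonneg fun i _ => rhoDisj_nonneg _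

lemma key_ineq (p : ℝ) (hp0 : 0 < p) (m : ℕ) (h1 : (6:ℝ)^m ≤ p⁻¹) (h2 : p⁻¹ < 6^(m+1)) :
    ((3:ℝ)⁻¹)^m + p * 2^m ≤ 6 * p ^ Real.logb 6 3 := by
  set α := Real.logb 6 3 with hα
  have h6 : (0:ℝ) < 6 := by norm_num
  have h6α : (6:ℝ) ^ α = 3 := Real.rpow_logb (by norm_num) (by norm_num) (by norm_num)
  have hα0 : 0 ≤ α := Real.logb_nonneg (by norm_num) (by norm_num)
  have hα1 : α ≤ 1 := by
    rw [hα]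
    calc Real.logb 6 3 ≤ Real.logb 6 6 :=
          Real.logb_le_logb_of_le (by norm_num) (by norm_num) (by norm_num)
      _ = 1 := Real.logb_self_eq_one (by norm_num)
  have hpα : 0 < p ^ α := Real.rpow_pos_of_pos hp0 _
  have h6m : (0:ℝ) < (6:ℝ)^m := by positivity
  have h3m : (3:ℝ)^m = ((6:ℝ)^m) ^ α := by
    rw [← h6α, ← Real.rpow_natCast ((6:ℝ)^α) m, ← Real.rpow_natCast (6:ℝ) m,
      ← Real.rpow_mul (le_of_lt h6), ← Real.rpow_mul (le_of_lt h6), mul_comm]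
  have h2m : (2:ℝ)^m = ((6:ℝ)^m) ^ (1 - α) := by
    have h62 : (6:ℝ) ^ (1 - α) = 2 := by
      rw [Real.rpow_sub h6, Real.rpow_one, h6α]; norm_num
    rw [← h62, ← Real.rpow_natCast ((6:ℝ)^(1-α)) m, ← Real.rpow_natCast (6:ℝ) m,
      ← Real.rpow_mul (le_of_lt h6), ← Real.rpow_mul (le_of_lt h6), mul_comm]
  have stepA : ((3:ℝ)⁻¹)^m ≤ 3 * p ^ α := by
    have hinv : ((6:ℝ)^m)⁻¹ ≤ 6 * p := by
      rw [inv_le_iff_one_le_mul₀ h6m]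
      have h : 1 < p * 6^(m+1) := by
        rw [← inv_lt_iff_one_lt_mul₀' hp0] at *
        · exact h2
      calc (1:ℝ) ≤ p * 6^(m+1) := le_of_lt h
        _ = 6 * p * 6^m := by ring
    calc ((3:ℝ)⁻¹)^m = ((3:ℝ)^m)⁻¹ := by rw [inv_pow]
      _ = (((6:ℝ)^m)^α)⁻¹ := by rw [h3m]
      _ = (((6:ℝ)^m)⁻¹)^α := by rw [← Real.inv_rpow (le_of_lt h6m)]
      _ ≤ (6 * p)^α := Real.rpow_le_rpow (by positivity) hinv hα0
      _ = 6^α * p^α := Real.mul_rpow (by norm_num) (le_of_lt hp0)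
      _ = 3 * p^α := by rw [h6α]
  have stepB : p * 2^m ≤ p ^ α := by
    have h : (2:ℝ)^m ≤ (p⁻¹) ^ (1 - α) := by
      rw [h2m]
      exact Real.rpow_le_rpow (le_of_lt h6m) h1 (by linarith)
    calc p * 2^m ≤ p * (p⁻¹)^(1-α) := by nlinarith
      _ = p * p^(α-1) := by rw [← Real.rpow_neg_one p, ← Real.rpow_mul (le_of_lt hp0)]; ring_nf
      _ = p^(1:ℝ) * p^(α-1) := by rw [Real.rpow_one]
      _ = p ^ α := by rw [← Real.rpow_add hp0]; ring_nf
  linarith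

theorem stmt18 (p : ℝ) (hp0 : 0 < p) (hp1 : p < 1) :
    agr rhoDisj p ≤ 6 * p ^ Real.logb 6 3 := by
  classical
  set m : ℕ := ⌊Real.logb 6 p⁻¹⌋₊ with hmdef
  have hpinv1 : 1 ≤ p⁻¹ := by
    rw [le_inv_comm₀ one_pos hp0]; simpa using le_of_lt hp1
  have hpinv0 : (0:ℝ) < p⁻¹ := by positivity
  have hlog0 : 0 ≤ Real.logb 6 p⁻¹ := Real.logb_nonneg (by norm_num) hpinv1
  have h1 : (6:ℝ)^m ≤ p⁻¹ := by
    calc (6:ℝ)^m = (6:ℝ)^(m:ℝ) := (Real.rpow_natCast 6 m).symm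
      _ ≤ (6:ℝ)^(Real.logb 6 p⁻¹) :=
          Real.rpow_le_rpow_of_exponent_le (by norm_num) (Nat.floor_le hlog0)
      _ = p⁻¹ := Real.rpow_logb (by norm_num) (by norm_num) hpinv0
  have h2 : p⁻¹ < (6:ℝ)^(m+1) := by
    calc p⁻¹ = (6:ℝ)^(Real.logb 6 p⁻¹) := (Real.rpow_logb (by norm_num) (by norm_num) hpinv0).symm
      _ < (6:ℝ)^(((m:ℝ))+1) :=
          Real.rpow_lt_rpow_of_exponent_lt (by norm_num) (Nat.lt_floor_add_one _)
      _ = (6:ℝ)^(m+1) := by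
          rw [show ((m:ℝ)+1) = (((m+1:ℕ)):ℝ) by push_cast; ring, Real.rpow_natCast]
  -- the scaling constant
  have hb1 : p * 3^m ≤ 1 := by
    have h36 : (3:ℝ)^m ≤ 6^m := by
      apply pow_le_pow_left₀ (by norm_num) (by norm_num)
    have hp6 : p * 6^m ≤ 1 := by
      calc p * 6^m ≤ p * p⁻¹ := by nlinarith
        _ = 1 := mul_inv_cancel₀ (ne_of_gt hp0)
    nlinarith [pow_pos (show (0:ℝ)<3 by norm_num) m]
  have hb0 : 0 ≤ p * 3^m := by positivity
  -- distinguished points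
  set w : Fin m → Bool := fun _ => true with hw
  set w' : Fin m → Bool := fun _ => false with hw'
  set f : (Fin m → Bool) → ℝ := fun u => if u = w then 1 else 0 with hfdef
  set g : (Fin m → Bool) → ℝ := fun v => if v = w' then p * 3^m else 0 with hgdef
  -- the three sums
  have hsucc : (∑ x : (Fin m → Bool) × (Fin m → Bool), iid rhoDisj m x * (f x.1 * g x.2)) = p := by
    rw [Fintype.sum_eq_single ((w, w') : (Fin m → Bool) × (Fin m → Bool))]
    · have hiid : iid rhoDisj m (w, w') = (3:ℝ)⁻¹^m := by
        unfold iid rhoDisj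
        simp [hw, hw', Finset.prod_const]
      have h31 : (3:ℝ)⁻¹^m * 3^m = 1 := by
        rw [← mul_pow]; norm_num
      simp only [hfdef, hgdef, if_pos rfl, hiid]
      nlinarith
    · intro x hx
      have : f x.1 * g x.2 = 0 := by
        rcases (show x.1 ≠ w ∨ x.2 ≠ w' by
          by_contra hcc
          push_neg at hcc
          exact hx (Prod.ext hcc.1 hcc.2)) with h | h
        · simp [hfdef, if_neg h]
        · simp [hgdef, if_neg h]
      rw [this, mul_zero]
  have hprodsum : ∀ c : Bool, (∑ v : Fin m → Bool, ∏ i : Fin m, rhoDisj (c, v i))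
      = (∑ b : Bool, rhoDisj (c, b)) ^ m := by
    intro c
    rw [← Fintype.piFinset_univ, Finset.sum_prod_piFinset Finset.univ
      (fun (_ : Fin m) (b : Bool) => rhoDisj (c, b)), Finset.prod_const, Finset.card_univ,
      Fintype.card_fin]
  have hprodsum' : ∀ c : Bool, (∑ u : Fin m → Bool, ∏ i : Fin m, rhoDisj (u i, c))
      = (∑ b : Bool, rhoDisj (b, c)) ^ m := by
    intro c
    rw [← Fintype.piFinset_univ, Finset.sum_prod_piFinset Finset.univ
      (fun (_ : Fin m) (b : Bool) => rhoDisj (b, c)), Finset.prod_const, Finset.card_univ,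
      Fintype.card_fin]
  have hc1 : (∑ x : (Fin m → Bool) × (Fin m → Bool), iid rhoDisj m x * f x.1)
      = (3:ℝ)⁻¹^m := by
    rw [Fintype.sum_prod_type]
    rw [Fintype.sum_eq_single w]
    · simp only [hfdef, if_pos rfl, mul_one]
      unfold iid
      simp only [hw]
      rw [hprodsum true]
      have : (∑ b : Bool, rhoDisj (true, b)) = 3⁻¹ := by
        simp [rhoDisj]
      rw [this]
    · intro u hu
      simp only [hfdef, if_neg hu, mul_zero, Finset.sum_const_zero]
  have hc2 : (∑ x : (Fin m → Bool) × (Fin m → Bool), iid rhoDisj m x * g x.2)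
      = p * 2^m := by
    rw [Fintype.sum_prod_type_right]
    rw [Fintype.sum_eq_single w']
    · simp only [hgdef, if_pos rfl]
      unfold iid
      simp only [hw']
      rw [← Finset.sum_mul, hprodsum' false]
      have hsb : (∑ b : Bool, rhoDisj (b, false)) = 2/3 := by
        simp [rhoDisj]; norm_num
      rw [hsb]
      have : ((2:ℝ)/3)^m * 3^m = 2^m := by
        rw [← mul_pow]; norm_num
      nlinarith
    · intro v hv
      simp only [hgdef, if_neg hv, mul_zero, Finset.sum_const_zero]
  -- conclude
  unfold agr
  refine le_trans (csInf_le ?_ ?_) (key_ineq p hp0 m h1 h2)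
  · refine ⟨0, fun c hc => ?_⟩
    obtain ⟨ℓ, F, G, hF, hG, _, hceq⟩ := hc
    have s1 : 0 ≤ ∑ x : (Fin ℓ → Bool) × (Fin ℓ → Bool), iid rhoDisj ℓ x * F x.1 :=
      Finset.sum_nonneg fun x _ => mul_nonneg (iid_rhoDisj_nonneg ℓ x) (hF x.1).1
    have s2 : 0 ≤ ∑ x : (Fin ℓ → Bool) × (Fin ℓ → Bool), iid rhoDisj ℓ x * G x.2 :=
      Finset.sum_nonneg fun x _ => mul_nonneg (iid_rhoDisj_nonneg ℓ x) (hG x.2).1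
    rw [hceq]; linarith
  · refine ⟨m, f, g, ?_, ?_, ?_, ?_⟩
    · intro x
      simp only [hfdef]
      split <;> norm_num
    · intro y
      simp only [hgdef]
      split
      · exact ⟨hb0, hb1⟩
      · norm_num
    · rw [hsucc]
    · rw [hc1, hc2]


end SR
end
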